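/- Let D be a strongly connected digraph with independence number α, and suppose that for every arc e of D, the induced subdigraph on N(e) = N^+(v) ∩ N^-(u) (where e = uv) has chromatic number at most t. Extend D to a tournament T by orienting each non-edge uv so that, whenever exactly one of N^+_A(v) ∩ N^-_A(u), N^+_A(u) ∩ N^-_A(v) is empty, the new arc is directed making the empty side the 'triangle side'. Then for every arc e of T (old or new), the D-chromatic number of the T-arc-neighborhood N_T(e) satisfies χ⃗(D[N_T(e)]) ≤ 3·F(t, α−1) + 2t, where F(t, α−1) is any bound on the chromatic number of digraphs with independence number α−1 all of whose arc neighborhoods have chromatic number ≤ t. -/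

import Mathlib

variable {V : Type*}

/-- A tournament: an asymmetric, total relation. -/
def IsTournament (A : V → V → Prop) : Prop :=
  (∀ u v, A u v → ¬ A v u) ∧ (∀ u v, u ≠ v → A u v ∨ A v u)

/-- For an arc `e = uv`, `N(e) = N⁺(v) ∩ N⁻(u)`: vertices `w` with `v → w → u`. -/
def ArcNbhd (A : V → V → Prop) (u v : V) : Set V := {w | A v w ∧ A w u}

/-- `S` induces an acyclic subdigraph. -/
def AcyclicOn (A : V → V → Prop) (S : Set V) : Prop :=
  ∀ v, ¬ Relation.TransGen (fun x y => x ∈ S ∧ y ∈ S ∧ A x y) v v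

/-- The (di)chromatic number of the subdigraph induced on `S` is at most `k`:
`S` is covered by `k` sets, each inducing an acyclic subdigraph. -/
def ChromLE (A : V → V → Prop) (S : Set V) (k : ℕ) : Prop :=
  ∃ C : Fin k → Set V, (∀ v ∈ S, ∃ i, v ∈ C i) ∧ ∀ i, AcyclicOn A (C i ∩ S)

/-- The (di)chromatic number of the subdigraph induced on `S` is at least `k`. -/
def ChromGE (A : V → V → Prop) (S : Set V) (k : ℕ) : Prop :=
  ∀ m, ChromLE A S m → k ≤ m

/-- Every arc neighborhood has chromatic number at most `t`. -/
def ArcBounded (A : V → V → Prop) (t : ℕ) : Prop :=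
  ∀ u v, A u v → ChromLE A (ArcNbhd A u v) t

/-- `P 0, P 1, …, P k` is a directed walk/path. -/
def IsPathOn (A : V → V → Prop) (P : ℕ → V) (k : ℕ) : Prop :=
  ∀ i < k, A (P i) (P (i + 1))

/-- `P 0, …, P k` is a shortest directed path from `P 0` to `P k`. -/
def IsShortestPath (A : V → V → Prop) (P : ℕ → V) (k : ℕ) : Prop :=
  IsPathOn A P k ∧
    ∀ (m : ℕ) (Q : ℕ → V), Q 0 = P 0 → Q m = P k → IsPathOn A Q m → k ≤ m

def StronglyConnected (A : V → V → Prop) : Prop :=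
  ∀ u v : V, Relation.ReflTransGen A u v

def StronglyConnectedOn (A : V → V → Prop) (S : Set V) : Prop :=
  ∀ u ∈ S, ∀ v ∈ S, Relation.ReflTransGen (fun x y => x ∈ S ∧ y ∈ S ∧ A x y) u v

/-- The subdigraph induced on `S` has independence number at most `n`. -/
def IndepLE (A : V → V → Prop) (S : Set V) (n : ℕ) : Prop :=
  ∀ I : Finset V, ↑I ⊆ S → (∀ x ∈ I, ∀ y ∈ I, ¬ A x y) → I.card ≤ n


section Helpers

lemma acyclicOn_mono' {A : V → V → Prop} {S S' : Set V} (hS : AcyclicOn A S)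
    (h : S' ⊆ S) : AcyclicOn A S' := by
  intro v hv
  exact hS v (Relation.TransGen.mono (fun x y (hxy : x ∈ S' ∧ y ∈ S' ∧ A x y) => (⟨h hxy.1, h hxy.2.1, hxy.2.2⟩ : x ∈ S ∧ y ∈ S ∧ A x y)) v v hv)

lemma acyclicOn_empty' (A : V → V → Prop) : AcyclicOn A (∅ : Set V) := by
  intro v hv
  cases hv with
  | single h => exact h.1
  | tail _ h => exact h.2.1

lemma chromLE_mono_set {A : V → V → Prop} {S S' : Set V} {k : ℕ} (h : S' ⊆ S)
    (hc : ChromLE A S k) : ChromLE A S' k := by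
  obtain ⟨C, hcov, hac⟩ := hc
  exact ⟨C, fun v hv => hcov v (h hv), fun i =>
    acyclicOn_mono' (hac i) (fun x hx => ⟨hx.1, h hx.2⟩)⟩

lemma chromLE_mono_k {A : V → V → Prop} {S : Set V} {k k' : ℕ} (h : k ≤ k')
    (hc : ChromLE A S k) : ChromLE A S k' := by
  obtain ⟨C, hcov, hac⟩ := hc
  refine ⟨fun i => if h2 : (i : ℕ) < k then C ⟨i, h2⟩ else ∅, ?_, ?_⟩
  · intro v hv
    obtain ⟨j, hj⟩ := hcov v hv
    refine ⟨⟨j.1, lt_of_lt_of_le j.2 h⟩, ?_⟩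
    simp only [j.2, dif_pos]
    simpa using hj
  · intro i
    by_cases h2 : (i : ℕ) < k
    · simp only [dif_pos h2]
      exact hac ⟨i, h2⟩
    · simp only [dif_neg h2]
      exact acyclicOn_mono' (acyclicOn_empty' A) (fun x hx => hx.1)

lemma chromLE_empty' (A : V → V → Prop) (k : ℕ) : ChromLE A (∅ : Set V) k :=
  chromLE_mono_k (Nat.zero_le k) ⟨Fin.elim0, fun v hv => absurd hv (by simp), fun i => i.elim0⟩

lemma chromLE_union {A : V → V → Prop} {S₁ S₂ : Set V} {a b : ℕ}
    (h₁ : ChromLE A S₁ a) (h₂ : ChromLE A S₂ b) : ChromLE A (S₁ ∪ S₂) (a + b) := by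
  obtain ⟨C₁, hcov₁, hac₁⟩ := h₁
  obtain ⟨C₂, hcov₂, hac₂⟩ := h₂
  refine ⟨fun i => if h2 : (i : ℕ) < a then C₁ ⟨i, h2⟩ ∩ S₁
    else C₂ ⟨(i : ℕ) - a, by omega⟩ ∩ S₂, ?_, ?_⟩
  · rintro v (hv | hv)
    · obtain ⟨j, hj⟩ := hcov₁ v hv
      refine ⟨⟨j.1, by omega⟩, ?_⟩
      simp only [j.2, dif_pos]
      exact ⟨by simpa using hj, hv⟩
    · obtain ⟨j, hj⟩ := hcov₂ v hv
      refine ⟨⟨a + j.1, by omega⟩, ?_⟩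
      have hna : ¬ (a + j.1 < a) := by omega
      simp only [hna, dif_neg, not_false_iff]
      refine ⟨?_, hv⟩
      have : a + j.1 - a = j.1 := by omega
      simp only [this]
      simpa using hj
  · intro i
    by_cases h2 : (i : ℕ) < a
    · simp only [dif_pos h2]
      exact acyclicOn_mono' (hac₁ ⟨i, h2⟩) (fun x hx => ⟨hx.1.1, hx.1.2⟩)
    · simp only [dif_neg h2]
      exact acyclicOn_mono' (hac₂ _) (fun x hx => ⟨hx.1.1, hx.1.2⟩)

/-- Transfer a coloring along a relation that agrees (in one direction) on `T`. -/
lemma chromLE_transfer {A A' : V → V → Prop} {S T : Set V} {k : ℕ} (hST : T ⊆ S)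
    (hag : ∀ x y, x ∈ T → y ∈ T → A x y → A' x y)
    (h : ChromLE A' S k) : ChromLE A T k := by
  obtain ⟨C, hcov, hac⟩ := h
  refine ⟨C, fun v hv => hcov v (hST hv), fun i v hv => hac i v (Relation.TransGen.mono ?_ v v hv)⟩
  rintro x y ⟨⟨hx1, hx2⟩, ⟨hy1, hy2⟩, hxy⟩
  exact ⟨⟨hx1, hST hx2⟩, ⟨hy1, hST hy2⟩, hag x y hx2 hy2 hxy⟩

/-- Sets of independence number at most `α - 1` get `F` colors, via `hF`. -/
lemma chromLE_of_small_indep (A : V → V → Prop) (α t F : ℕ)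
    (hA : ∀ u v, A u v → ¬ A v u)
    (hb : ∀ u v, A u v → ChromLE A (ArcNbhd A u v) t)
    (hF : ∀ A' : V → V → Prop, (∀ u v, A' u v → ¬ A' v u) →
      IndepLE A' Set.univ (α - 1) →
      (∀ u v, A' u v → ChromLE A' (ArcNbhd A' u v) t) →
      ChromLE A' Set.univ F)
    (hα : 1 ≤ α - 1) (S : Set V)
    (hSind : ∀ I : Finset V, ↑I ⊆ S → (∀ x ∈ I, ∀ y ∈ I, ¬ A x y) → I.card ≤ α - 1) :
    ChromLE A S F := by
  set r : V → V → Prop := WellOrderingRel with hr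
  set A' : V → V → Prop := fun x y =>
    (x ∈ S ∧ y ∈ S ∧ A x y) ∨ (x ∉ S ∧ y ∈ S) ∨ (x ∉ S ∧ y ∉ S ∧ r x y) with hA'
  have rasym : ∀ x y : V, r x y → ¬ r y x := fun x y h1 h2 =>
    (irrefl_of r x) (trans_of r h1 h2)
  have hasym : ∀ x y, A' x y → ¬ A' y x := by
    rintro x y (⟨hx, hy, h⟩ | ⟨hx, hy⟩ | ⟨hx, hy, h⟩) (⟨hx', hy', h'⟩ | ⟨hx', hy'⟩ | ⟨hx', hy', h'⟩) <;>
      first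
        | exact hA x y h h'
        | exact rasym x y h h'
        | tauto
  have hindep : IndepLE A' Set.univ (α - 1) := by
    intro I _ hI
    by_cases hex : ∃ x ∈ I, x ∉ S
    · obtain ⟨x, hxI, hxS⟩ := hex
      have hsingle : ∀ a ∈ I, ∀ b ∈ I, a = b := by
        intro a ha b hb
        have key : ∀ c ∈ I, c = x := by
          intro c hc
          by_contra hne
          by_cases hcS : c ∈ S
          · exact hI x hxI c hc (Or.inr (Or.inl ⟨hxS, hcS⟩))
          · rcases trichotomous_of r x c with h | h | h
            · exact hI x hxI c hc (Or.inr (Or.inr ⟨hxS, hcS, h⟩))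
            · exact hne h.symm
            · exact hI c hc x hxI (Or.inr (Or.inr ⟨hcS, hxS, h⟩))
        rw [key a ha, key b hb]
      calc I.card ≤ 1 := Finset.card_le_one.mpr hsingle
        _ ≤ α - 1 := hα
    · push_neg at hex
      exact hSind I (fun x hx => hex x hx)
        (fun x hx y hy hxy => hI x hx y hy (Or.inl ⟨hex x hx, hex y hy, hxy⟩))
  have harc : ∀ u v, A' u v → ChromLE A' (ArcNbhd A' u v) t := by
    rintro x y (⟨hxS, hyS, hxy⟩ | ⟨hxS, hyS⟩ | ⟨hxS, hyS, hxy⟩)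
    · -- real arc inside S
      have hsub : ArcNbhd A' x y ⊆ ArcNbhd A x y ∩ S := by
        rintro w ⟨h1, h2⟩
        have hwS : w ∈ S := by
          rcases h1 with ⟨_, hw, _⟩ | ⟨hy', _⟩ | ⟨hy', _, _⟩
          · exact hw
          · exact absurd hyS hy'
          · exact absurd hyS hy'
        have hAyw : A y w := by
          rcases h1 with ⟨_, _, h⟩ | ⟨hy', _⟩ | ⟨hy', _, _⟩
          · exact h
          · exact absurd hyS hy'
          · exact absurd hyS hy'
        have hAwx : A w x := by
          rcases h2 with ⟨_, _, h⟩ | ⟨hw', _⟩ | ⟨hw', _, _⟩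
          · exact h
          · exact absurd hwS hw'
          · exact absurd hwS hw'
        exact ⟨⟨hAyw, hAwx⟩, hwS⟩
      have hsub' : ArcNbhd A' x y ⊆ ArcNbhd A x y := fun w hw => (hsub hw).1
      have hag : ∀ w z, w ∈ ArcNbhd A' x y → z ∈ ArcNbhd A' x y → A' w z → A w z := by
        intro w z hw hz hwz
        rcases hwz with ⟨_, _, h⟩ | ⟨hw', _⟩ | ⟨hw', _, _⟩
        · exact h
        · exact absurd (hsub hw).2 hw'
        · exact absurd (hsub hw).2 hw'
      exact chromLE_transfer hsub' hag (hb x y hxy)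
    · -- arc from outside into S : empty neighborhood
      have hsub : ArcNbhd A' x y ⊆ (∅ : Set V) := by
        rintro w ⟨h1, h2⟩
        have hwS : w ∈ S := by
          rcases h1 with ⟨_, hw, _⟩ | ⟨hy', _⟩ | ⟨hy', _, _⟩
          · exact hw
          · exact absurd hyS hy'
          · exact absurd hyS hy'
        rcases h2 with ⟨_, hx', _⟩ | ⟨_, hx'⟩ | ⟨hw', _, _⟩
        · exact absurd hx' hxS
        · exact absurd hx' hxS
        · exact absurd hwS hw'
      exact chromLE_mono_set hsub (chromLE_empty' A' t)
    · -- arc among outside vertices : empty neighborhood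
      have hsub : ArcNbhd A' x y ⊆ (∅ : Set V) := by
        rintro w ⟨h1, h2⟩
        have hwout : w ∉ S ∧ r w x := by
          rcases h2 with ⟨_, hx', _⟩ | ⟨_, hx'⟩ | ⟨hw', _, hrwx⟩
          · exact absurd hx' hxS
          · exact absurd hx' hxS
          · exact ⟨hw', hrwx⟩
        have hryw : r y w := by
          rcases h1 with ⟨hy', _, _⟩ | ⟨_, hw'⟩ | ⟨_, _, hryw⟩
          · exact absurd hy' hyS
          · exact absurd hw' hwout.1
          · exact hryw
        exact (irrefl_of r x) (trans_of r (trans_of r hxy hryw) hwout.2)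
      exact chromLE_mono_set hsub (chromLE_empty' A' t)
  have hcol := hF A' hasym hindep harc
  refine chromLE_transfer (Set.subset_univ S) ?_ hcol
  intro x y hx hy hxy
  exact Or.inl ⟨hx, hy, hxy⟩

end Helpers

theorem stmt18 (A B : V → V → Prop) (α t F : ℕ)
    (hA : ∀ u v, A u v → ¬ A v u)
    (hsc : StronglyConnected A)
    (hind : IndepLE A Set.univ α)
    (hb : ∀ u v, A u v → ChromLE A (ArcNbhd A u v) t)
    (hTour : IsTournament (fun u v => A u v ∨ B u v))
    (hBnew : ∀ u v, B u v → ¬ A u v ∧ ¬ A v u)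
    (horient : ∀ u v, B u v →
      (ArcNbhd A u v = ∅ ∨ ((ArcNbhd A u v).Nonempty ∧ (ArcNbhd A v u).Nonempty)))
    (hF : ∀ A' : V → V → Prop, (∀ u v, A' u v → ¬ A' v u) →
      IndepLE A' Set.univ (α - 1) →
      (∀ u v, A' u v → ChromLE A' (ArcNbhd A' u v) t) →
      ChromLE A' Set.univ F) :
    ∀ u v, (A u v ∨ B u v) →
      ChromLE A (ArcNbhd (fun x y => A x y ∨ B x y) u v) (3 * F + 2 * t)  := by
  classical
  intro u v huv
  set T : V → V → Prop := fun x y => A x y ∨ B x y with hT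
  -- B arcs join distinct nonadjacent vertices
  have hBnd : ∀ x y, B x y → ¬ A x y ∧ ¬ A y x ∧ x ≠ y := by
    intro x y hB
    refine ⟨(hBnew x y hB).1, (hBnew x y hB).2, ?_⟩
    rintro rfl
    exact hTour.1 x x (Or.inr hB) (Or.inr hB)
  by_cases hα2 : 2 ≤ α
  · -- main case
    have hα1 : 1 ≤ α - 1 := by omega
    -- any set of vertices all nonadjacent to some z gets F colors
    have chromF : ∀ (z : V) (S : Set V),
        (∀ w ∈ S, ¬ A w z ∧ ¬ A z w ∧ w ≠ z) → ChromLE A S F := by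
      intro z S hSz
      refine chromLE_of_small_indep A α t F hA hb hF hα1 S ?_
      intro I hIS hI
      have hzI : z ∉ I := fun hz => (hSz z (hIS hz)).2.2 rfl
      have hins : ∀ a ∈ insert z I, ∀ b ∈ insert z I, ¬ A a b := by
        intro a ha b hb
        rcases Finset.mem_insert.mp ha with rfl | ha'
        · rcases Finset.mem_insert.mp hb with rfl | hb'
          · exact fun h => hA _ _ h h
          · exact (hSz b (hIS (Finset.mem_coe.mpr hb'))).2.1
        · rcases Finset.mem_insert.mp hb with rfl | hb'
          · exact (hSz a (hIS (Finset.mem_coe.mpr ha'))).1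
          · exact hI a ha' b hb'
      have := hind (insert z I) (Set.subset_univ _) hins
      rw [Finset.card_insert_of_notMem hzI] at this
      omega
    have chromB_in : ∀ z : V, ChromLE A {w | B w z} F := by
      intro z
      refine chromF z _ ?_
      intro w hw
      exact ⟨(hBnd w z hw).1, (hBnd w z hw).2.1, (hBnd w z hw).2.2⟩
    have chromB_out : ∀ z : V, ChromLE A {w | B z w} F := by
      intro z
      refine chromF z _ ?_
      intro w hw
      exact ⟨(hBnd z w hw).2.1, (hBnd z w hw).1, (hBnd z w hw).2.2.symm⟩
    rcases huv with hAuv | hBuv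
    · -- old arc
      have hsub : ArcNbhd T u v ⊆ ArcNbhd A u v ∪ ({w | B v w} ∪ {w | B w u}) := by
        rintro w ⟨h1, h2⟩
        rcases h1 with h1 | h1
        · rcases h2 with h2 | h2
          · exact Or.inl ⟨h1, h2⟩
          · exact Or.inr (Or.inr h2)
        · exact Or.inr (Or.inl h1)
      refine chromLE_mono_k (by omega : t + (F + F) ≤ 3 * F + 2 * t)
        (chromLE_mono_set hsub
          (chromLE_union (hb u v hAuv) (chromLE_union (chromB_out v) (chromB_in u))))
    · -- new arc
      rcases horient u v hBuv with hemp | ⟨_, w, hw⟩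
      · have hsub : ArcNbhd T u v ⊆ {w | B v w} ∪ {w | B w u} := by
          rintro x ⟨h1, h2⟩
          rcases h1 with h1 | h1
          · rcases h2 with h2 | h2
            · exact absurd (show x ∈ ArcNbhd A u v from (⟨h1, h2⟩ : A v x ∧ A x u)) (by rw [hemp]; simp)
            · exact Or.inr h2
          · exact Or.inl h1
        refine chromLE_mono_k (by omega : F + F ≤ 3 * F + 2 * t)
          (chromLE_mono_set hsub (chromLE_union (chromB_out v) (chromB_in u)))
      · -- w ∈ ArcNbhd A v u : A u w and A w v
        have hAuw : A u w := hw.1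
        have hAwv : A w v := hw.2
        have hsub : ArcNbhd T u v ⊆
            (ArcNbhd A u w ∪ ArcNbhd A w v) ∪
              ({x | ¬ A x w ∧ ¬ A w x ∧ x ≠ w} ∪ ({x | B v x} ∪ {x | B x u})) := by
          rintro x ⟨h1, h2⟩
          rcases h1 with h1 | h1
          · rcases h2 with h2 | h2
            · -- A v x and A x u
              by_cases hwx : A w x
              · exact Or.inl (Or.inl ⟨hwx, h2⟩)
              · by_cases hxw : A x w
                · exact Or.inl (Or.inr ⟨h1, hxw⟩)
                · refine Or.inr (Or.inl ⟨hxw, hwx, ?_⟩)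
                  rintro rfl
                  exact hA x v hAwv h1
            · exact Or.inr (Or.inr (Or.inr h2))
          · exact Or.inr (Or.inr (Or.inl h1))
        have chromW : ChromLE A {x | ¬ A x w ∧ ¬ A w x ∧ x ≠ w} F :=
          chromF w _ (fun x hx => hx)
        refine chromLE_mono_k (by omega : (t + t) + (F + (F + F)) ≤ 3 * F + 2 * t)
          (chromLE_mono_set hsub
            (chromLE_union (chromLE_union (hb u w hAuw) (hb w v hAwv))
              (chromLE_union chromW (chromLE_union (chromB_out v) (chromB_in u)))))
  · -- degenerate case: α ≤ 1, hence B is empty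
    have hBemp : ∀ x y, ¬ B x y := by
      intro x y hB
      obtain ⟨h1, h2, h3⟩ := hBnd x y hB
      have hI : ∀ a ∈ ({x, y} : Finset V), ∀ b ∈ ({x, y} : Finset V), ¬ A a b := by
        intro a ha b hb
        have ha' : a = x ∨ a = y := by simpa using ha
        have hb' : b = x ∨ b = y := by simpa using hb
        rcases ha' with rfl | rfl <;> rcases hb' with rfl | rfl
        · exact fun h => hA _ _ h h
        · exact h1
        · exact h2
        · exact fun h => hA _ _ h h
      have := hind {x, y} (Set.subset_univ _) hI
      rw [Finset.card_insert_of_notMem (by simpa using h3), Finset.card_singleton] at this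
      omega
    rcases huv with hAuv | hBuv
    · have hsub : ArcNbhd T u v ⊆ ArcNbhd A u v := by
        rintro x ⟨h1, h2⟩
        rcases h1 with h1 | h1
        · rcases h2 with h2 | h2
          · exact ⟨h1, h2⟩
          · exact absurd h2 (hBemp x u)
        · exact absurd h1 (hBemp v x)
      exact chromLE_mono_k (by omega : t ≤ 3 * F + 2 * t)
        (chromLE_mono_set hsub (hb u v hAuv))
    · exact absurd hBuv (hBemp u v)
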